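/- arXiv:1406.0444 — 9 statements merged into one kernel-verified Lean document; each statement's English description precedes it below -/
import Mathlib

section
/- Let n ≥ 1 and let λ^L, λ^R be partitions; form the bipartition λ = (λ^L, λ^R) and take δ = 0. Then the weight diagram of λ has no vertex labelled × and no vertex labelled ∘ — that is, I_∧(λ) ∩ I_∨(λ) = ∅ and I_∧(λ) ∪ I_∨(λ) = ℤ (the condition that the associated mixed tensor R(λ^L, λ^R) of Gl(n|n) is maximally atypical) — if and only if λ^R = (λ^L)*. -/
/-- A partition, encoded 0-indexed: `f i` is the part `λ_{i+1}`.  It is weakly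
decreasing and eventually zero. -/
structure PartitionFn where
  f : ℕ → ℕ
  antitone' : ∀ i j : ℕ, i ≤ j → f j ≤ f i
  ev_zero : ∃ N : ℕ, ∀ i : ℕ, N ≤ i → f i = 0

/-- The conjugate partition (0-indexed): `conjFn f j = λ*_{j+1} = #{i ≥ 1 : λ_i ≥ j+1}`. -/
noncomputable def conjFn (f : ℕ → ℕ) (j : ℕ) : ℕ := Set.ncard {i : ℕ | j + 1 ≤ f i}

/-- The length `l(λ) = #{i : λ_i > 0}` of a partition. -/
noncomputable def plen (f : ℕ → ℕ) : ℕ := Set.ncard {i : ℕ | 0 < f i}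

/-- `I_∧(λ) = {λ^L_i − i + 1 : i ≥ 1}` (0-indexed: `{λ^L_{i+1} − i : i ≥ 0}`). -/
def Iwedge (fL : ℕ → ℕ) : Set ℤ := {x : ℤ | ∃ i : ℕ, x = (fL i : ℤ) - (i : ℤ)}

/-- `I_∨(λ) = {i − δ − λ^R_i : i ≥ 1}` (0-indexed: `{(i+1) − δ − λ^R_{i+1} : i ≥ 0}`). -/
def Ivee (δ : ℤ) (fR : ℕ → ℕ) : Set ℤ :=
  {x : ℤ | ∃ i : ℕ, x = (i : ℤ) + 1 - δ - (fR i : ℤ)}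

/-- Vertex `x` is labelled `∨` in the weight diagram of the bipartition `(fL, fR)`. -/
def VeeLabel (δ : ℤ) (fL fR : ℕ → ℕ) (x : ℤ) : Prop :=
  x ∈ Ivee δ fR ∧ x ∉ Iwedge fL

/-- Vertex `x` is labelled `∧` in the weight diagram of the bipartition `(fL, fR)`. -/
def WedgeLabel (δ : ℤ) (fL fR : ℕ → ℕ) (x : ℤ) : Prop :=
  x ∈ Iwedge fL ∧ x ∉ Ivee δ fR

/-- A finite family of pairwise disjoint pairs `(v, w)` with `v < w`, `v` labelled `∨`
and `w` labelled `∧` in the weight diagram of the bipartition `(fL, fR)` relative to `δ`. -/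
def CapFamily (δ : ℤ) (fL fR : ℕ → ℕ) (S : Finset (ℤ × ℤ)) : Prop :=
  (∀ p ∈ S, p.1 < p.2 ∧ VeeLabel δ fL fR p.1 ∧ WedgeLabel δ fL fR p.2) ∧
  ∀ p ∈ S, ∀ q ∈ S, p ≠ q →
    p.1 ≠ q.1 ∧ p.1 ≠ q.2 ∧ p.2 ≠ q.1 ∧ p.2 ≠ q.2

/-- The defect of the bipartition `(fL, fR)` relative to `δ` equals `n`:
`n` is the maximal cardinality of a `CapFamily`. -/
def DefectEq (δ : ℤ) (fL fR : ℕ → ℕ) (n : ℕ) : Prop :=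
  (∃ S : Finset (ℤ × ℤ), CapFamily δ fL fR S ∧ S.card = n) ∧
  ∀ S : Finset (ℤ × ℤ), CapFamily δ fL fR S → S.card ≤ n

/-- The bipartition `(fL, fR)` is `(m|n)`-cross:
`∃ 1 ≤ i ≤ m+1` with `λ^L_i + λ^R_{m+2−i} ≤ n` (0-indexed below). -/
def IsCross (m n : ℕ) (fL fR : ℕ → ℕ) : Prop :=
  ∃ i : ℕ, i ≤ m ∧ fL i + fR (m - i) ≤ n

lemma conj_mem (p : PartitionFn) (j i : ℕ) : j + 1 ≤ p.f i ↔ i < conjFn p.f j := by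
  obtain ⟨N, hN⟩ := p.ev_zero
  have hex : ∃ m, p.f m ≤ j := ⟨N, by simp [hN N le_rfl]⟩
  set m := Nat.find hex with hm
  have hset : {i : ℕ | j + 1 ≤ p.f i} = Set.Iio m := by
    ext i
    simp only [Set.mem_setOf_eq, Set.mem_Iio]
    constructor
    · intro h
      by_contra hlt
      push_neg at hlt
      have h1 := p.antitone' m i hlt
      have h2 : p.f m ≤ j := Nat.find_spec hex
      omega
    · intro h
      have : ¬ p.f i ≤ j := Nat.find_min hex h
      omega
  have hc : conjFn p.f j = m := by
    rw [conjFn, hset, ← Finset.coe_Iio, Set.ncard_coe_finset, Nat.card_Iio]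
  rw [hc, Set.ext_iff] at *
  have := hset i
  simp only [Set.mem_setOf_eq, Set.mem_Iio] at this
  rw [hc]
  exact this

lemma conj_anti (p : PartitionFn) (j j' : ℕ) (h : j ≤ j') :
    conjFn p.f j' ≤ conjFn p.f j := by
  by_contra hc
  push_neg at hc
  have h1 : j' + 1 ≤ p.f (conjFn p.f j) := (conj_mem p j' _).mpr hc
  have h2 : conjFn p.f j < conjFn p.f j := (conj_mem p j _).mp (by omega)
  omega

lemma disj (p : PartitionFn) (i j : ℕ) :
    (p.f i : ℤ) - i ≠ (j : ℤ) + 1 - conjFn p.f j := by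
  have h := conj_mem p j i
  intro he
  by_cases hle : j + 1 ≤ p.f i
  · have := h.mp hle; omega
  · have : ¬ i < conjFn p.f j := fun hh => hle (h.mpr hh); omega

lemma cover (p : PartitionFn) (x : ℤ) :
    (∃ i : ℕ, x = (p.f i : ℤ) - i) ∨ (∃ j : ℕ, x = (j : ℤ) + 1 - conjFn p.f j) := by
  by_cases hL : ∃ i : ℕ, x = (p.f i : ℤ) - i
  · exact Or.inl hL
  right
  push_neg at hL
  obtain ⟨N, hN⟩ := p.ev_zero
  have hex : ∃ i : ℕ, (p.f i : ℤ) ≤ x + i := by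
    refine ⟨N + x.natAbs, ?_⟩
    rw [hN (N + x.natAbs) (by omega)]
    omega
  set i0 := Nat.find hex with hi0
  have h1 : (p.f i0 : ℤ) ≤ x + i0 := Nat.find_spec hex
  have hne : (p.f i0 : ℤ) ≠ x + i0 := fun h => (hL i0) (by omega)
  have hpos : 1 ≤ x + i0 := by
    have : (0 : ℤ) ≤ p.f i0 := Int.natCast_nonneg _
    omega
  set j := (x + i0 - 1).toNat with hj
  have hjz : (j : ℤ) = x + i0 - 1 := Int.toNat_of_nonneg (by omega)
  have hcj : conjFn p.f j = i0 := by
    have hub : ¬ (j + 1 ≤ p.f i0) := by omega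
    have hub' : ¬ i0 < conjFn p.f j := fun hh => hub ((conj_mem p j i0).mpr hh)
    rcases Nat.eq_zero_or_pos i0 with h0 | h0
    · omega
    · have hmin : ¬ ((p.f (i0 - 1) : ℤ) ≤ x + (i0 - 1 : ℕ)) := Nat.find_min hex (by omega)
      have hlb : j + 1 ≤ p.f (i0 - 1) := by omega
      have := (conj_mem p j (i0 - 1)).mp hlb
      omega
  refine ⟨j, ?_⟩
  rw [hcj]
  omega

lemma sm_range_eq {h1 h2 : ℕ → ℤ} (m1 : StrictMono h1) (m2 : StrictMono h2)
    (hr : Set.range h1 = Set.range h2) : h1 = h2 := by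
  have key : ∀ (a b : ℕ → ℤ), StrictMono a → StrictMono b →
      Set.range a ⊆ Set.range b → ∀ j, b j ≤ a j := by
    intro a b ma mb hs j
    choose φ hφ using fun j => hs (Set.mem_range_self (f := a) j)
    have mφ : StrictMono φ := fun u v huv => by
      have : b (φ u) < b (φ v) := by rw [hφ u, hφ v]; exact ma huv
      exact mb.lt_iff_lt.mp this
    calc b j ≤ b (φ j) := mb.monotone mφ.le_apply
      _ = a j := hφ j
  funext j
  exact le_antisymm (key h2 h1 m2 m1 hr.symm.subset j) (key h1 h2 m1 m2 hr.subset j)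

lemma h_sm (q : ℕ → ℕ) (hq : ∀ i j, i ≤ j → q j ≤ q i) :
    StrictMono (fun j : ℕ => (j : ℤ) + 1 - q j) :=
  strictMono_nat_of_lt_succ (fun n => by
    have := hq n (n + 1) (by omega)
    push_cast
    omega)

/-- for `δ = 0`, the weight diagram of the bipartition `(λ^L, λ^R)` has no
`×` and no `∘` (i.e. `I_∧ ∩ I_∨ = ∅` and `I_∧ ∪ I_∨ = ℤ`) iff `λ^R = (λ^L)*`. -/
theorem stmt0 (n : ℕ) (hn : 1 ≤ n) (lamL lamR : PartitionFn) :
    (Iwedge lamL.f ∩ Ivee 0 lamR.f = ∅ ∧ Iwedge lamL.f ∪ Ivee 0 lamR.f = Set.univ)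
      ↔ lamR.f = conjFn lamL.f := by

  constructor
  · rintro ⟨hd, hc⟩
    have hRangeEq : Set.range (fun j : ℕ => (j : ℤ) + 1 - lamR.f j)
        = Set.range (fun j : ℕ => (j : ℤ) + 1 - conjFn lamL.f j) := by
      ext x
      simp only [Set.mem_range]
      constructor
      · rintro ⟨i, hi⟩
        have hxv : x ∉ Iwedge lamL.f := by
          intro hw
          have hmem : x ∈ Iwedge lamL.f ∩ Ivee 0 lamR.f := ⟨hw, ⟨i, by omega⟩⟩
          rw [hd] at hmem; exact hmem
        rcases cover lamL x with h | h
        · exact absurd h hxv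
        · obtain ⟨j, hj⟩ := h; exact ⟨j, by omega⟩
      · rintro ⟨i, hi⟩
        have hxw : x ∉ Iwedge lamL.f := by
          rintro ⟨k, hk⟩
          exact disj lamL k i (by omega)
        have hmem : x ∈ Iwedge lamL.f ∪ Ivee 0 lamR.f := by rw [hc]; trivial
        rcases hmem with h | h
        · exact absurd h hxw
        · obtain ⟨j, hj⟩ := h; exact ⟨j, by omega⟩
    have heq := sm_range_eq (h_sm lamR.f lamR.antitone')
      (h_sm (conjFn lamL.f) (conj_anti lamL)) hRangeEq
    funext j
    have := congrFun heq j
    omega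
  · intro h
    rw [h]
    constructor
    · ext x
      simp only [Set.mem_inter_iff, Set.mem_empty_iff_false, iff_false]
      rintro ⟨⟨i, hi⟩, ⟨j, hj⟩⟩
      exact disj lamL i j (by omega)
    · ext x
      simp only [Set.mem_union, Set.mem_univ, iff_true]
      rcases cover lamL x with h | h
      · exact Or.inl h
      · obtain ⟨j, hj⟩ := h; exact Or.inr ⟨j, by omega⟩
end

section
/- Let n ≥ 1 and let (λ^L, λ^R) be a bipartition that is (n|n)-cross. Then the bipartition ((λ^R)*, (λ^L)*) is also (n|n)-cross. (This shows that the involution I sending R(λ^L, λ^R) to R((λ^R)*, (λ^L)*) is well defined on mixed tensors of Gl(n|n).) -/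
lemma conj_le_of (f : ℕ → ℕ) (hf : ∀ i j : ℕ, i ≤ j → f j ≤ f i) {j k : ℕ}
    (h : f k ≤ j) : conjFn f j ≤ k := by
  have hsub : {i : ℕ | j + 1 ≤ f i} ⊆ Set.Iio k := by
    intro i hi
    simp only [Set.mem_setOf_eq] at hi
    simp only [Set.mem_Iio]
    by_contra hik
    push_neg at hik
    have := hf k i hik
    omega
  calc conjFn f j ≤ (Set.Iio k).ncard := Set.ncard_le_ncard hsub (Set.finite_Iio k)
    _ = k := by simp [Set.ncard_eq_toFinset_card']

/-- if `(λ^L, λ^R)` is `(n|n)`-cross then so is `((λ^R)*, (λ^L)*)`. -/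
theorem stmt1 (n : ℕ) (hn : 1 ≤ n) (lamL lamR : PartitionFn)
    (h : IsCross n n lamL.f lamR.f) :
    IsCross n n (conjFn lamR.f) (conjFn lamL.f) := by
  obtain ⟨i, hi, hsum⟩ := h
  refine ⟨lamR.f (n - i), by omega, ?_⟩
  have h1 : conjFn lamR.f (lamR.f (n - i)) ≤ n - i :=
    conj_le_of _ lamR.antitone' le_rfl
  have h2 : conjFn lamL.f (n - lamR.f (n - i)) ≤ i :=
    conj_le_of _ lamL.antitone' (by omega)
  omega
end

section
/- Let δ ≥ 0 be an integer and let λ = (λ^L, λ^R) be a bipartition of length l(λ^L) + l(λ^R) ≤ δ. Then the defect of λ relative to δ is zero; equivalently, in the weight diagram of λ relative to δ there is no pair of integers v < w with v labelled ∨ and w labelled ∧. (In particular the maximally atypical mixed tensors R(λ) of Gl(m|n) with nonvanishing superdimension, i.e. those with l(λ) ≤ m − n, are irreducible.) -/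

lemma plen_zero (p : PartitionFn) {i : ℕ} (hi : plen p.f ≤ i) : p.f i = 0 := by
  by_contra hne
  have hpos : 0 < p.f i := Nat.pos_of_ne_zero hne
  obtain ⟨N, hN⟩ := p.ev_zero
  have hfin : {j : ℕ | 0 < p.f j}.Finite := by
    apply Set.Finite.subset (Set.finite_Iio N)
    intro j hj
    simp only [Set.mem_setOf_eq] at hj
    simp only [Set.mem_Iio]
    by_contra hjN
    have := hN j (by omega)
    omega
  have hsub : Set.Iic i ⊆ {j : ℕ | 0 < p.f j} := by
    intro j hj
    exact lt_of_lt_of_le hpos (p.antitone' j i hj)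
  have hcard : (Set.Iic i).ncard ≤ plen p.f :=
    Set.ncard_le_ncard hsub hfin
  have : (Set.Iic i).ncard = i + 1 := by
    rw [← Finset.coe_Iic, Set.ncard_coe_finset, Nat.card_Iic]
  omega

/-- if `δ ≥ 0` and `l(λ^L) + l(λ^R) ≤ δ` then the defect of `(λ^L, λ^R)`
relative to `δ` is zero: there is no pair `v < w` with `v` labelled `∨` and `w` labelled `∧`. -/
theorem stmt3 (δ : ℕ) (lamL lamR : PartitionFn)
    (h : plen lamL.f + plen lamR.f ≤ δ) :
    ¬ ∃ v w : ℤ, v < w ∧ VeeLabel (δ : ℤ) lamL.f lamR.f v ∧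
      WedgeLabel (δ : ℤ) lamL.f lamR.f w := by
  rintro ⟨v, w, hvw, ⟨hvIn, hvNot⟩, ⟨hwIn, hwNot⟩⟩
  set lL := plen lamL.f with hlL
  set lR := plen lamR.f with hlR
  -- v ∉ Iwedge ⟹ v > -lL
  have hv : -(lL : ℤ) < v := by
    by_contra hc
    push_neg at hc
    apply hvNot
    refine ⟨(-v).toNat, ?_⟩
    have h1 : ((-v).toNat : ℤ) = -v := Int.toNat_of_nonneg (by linarith [Int.ofNat_nonneg lL])
    have h2 : lL ≤ (-v).toNat := by omega
    rw [plen_zero lamL h2]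
    omega
  -- w ∉ Ivee ⟹ w ≤ lR - δ
  have hw : w ≤ (lR : ℤ) - δ := by
    by_contra hc
    push_neg at hc
    apply hwNot
    refine ⟨(w + δ - 1).toNat, ?_⟩
    have h1 : ((w + δ - 1).toNat : ℤ) = w + δ - 1 := Int.toNat_of_nonneg (by omega)
    have h2 : lR ≤ (w + δ - 1).toNat := by omega
    rw [plen_zero lamR h2]
    omega
  have : (lL : ℤ) + lR ≤ δ := by exact_mod_cast h
  omega
end

section
/- Let k ≥ 0 and let λ be a partition with l(λ) ≤ k. Then the defect of the bipartition (λ, λ*) relative to δ = 0 satisfies d((λ, λ*)) ≤ k. -/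
/-- if `l(λ) ≤ k` then `d((λ, λ*)) ≤ k` relative to `δ = 0`. -/
theorem stmt4 (k : ℕ) (lam : PartitionFn) (h : plen lam.f ≤ k)
    (S : Finset (ℤ × ℤ)) (hS : CapFamily 0 lam.f (conjFn lam.f) S) :
    S.card ≤ k := by
  obtain ⟨hlab, hdisj⟩ := hS
  obtain ⟨N, hN⟩ := lam.ev_zero
  have hfin : {i : ℕ | 0 < lam.f i}.Finite := by
    apply Set.Finite.subset (Set.finite_Iio N)
    intro i hi
    simp only [Set.mem_setOf_eq] at hi
    by_contra hc
    simp only [Set.mem_Iio, not_lt] at hc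
    exact absurd (hN i hc) (by omega)
  have hzero : ∀ i, k ≤ i → lam.f i = 0 := by
    intro i hi
    by_contra hc
    have hsub : (↑(Finset.Iic i) : Set ℕ) ⊆ {j : ℕ | 0 < lam.f j} := by
      intro j hj
      simp only [Finset.coe_Iic, Set.mem_Iic] at hj
      have := lam.antitone' j i hj
      simp only [Set.mem_setOf_eq]; omega
    have hle := Set.ncard_le_ncard hsub hfin
    rw [Set.ncard_coe_finset, Nat.card_Iic] at hle
    have hpl : plen lam.f = {j : ℕ | 0 < lam.f j}.ncard := rfl
    omega
  have hconj_le : ∀ m, conjFn lam.f m ≤ k := by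
    intro m
    have hsub : {j : ℕ | m + 1 ≤ lam.f j} ⊆ {j : ℕ | 0 < lam.f j} := by
      intro j hj
      simp only [Set.mem_setOf_eq] at hj ⊢
      omega
    have := Set.ncard_le_ncard hsub hfin
    unfold conjFn
    exact this.trans h
  have key : ∀ p ∈ S, ∃ i < k, p.2 = (lam.f i : ℤ) - i := by
    intro p hp
    obtain ⟨hlt, hv, hw⟩ := hlab p hp
    obtain ⟨⟨j, hj⟩, -⟩ := hw
    obtain ⟨⟨m, hm⟩, -⟩ := hv
    have hc1 : conjFn lam.f m ≤ k := hconj_le m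
    have hp1 : (1 : ℤ) - k ≤ p.1 := by
      rw [hm]
      have : (conjFn lam.f m : ℤ) ≤ (k : ℤ) := by exact_mod_cast hc1
      omega
    have hp2 : (2 : ℤ) - k ≤ p.2 := by omega
    refine ⟨j, ?_, hj⟩
    by_contra hcj
    push_neg at hcj
    have hj0 : lam.f j = 0 := hzero j hcj
    rw [hj, hj0] at hp2
    have : (k : ℤ) ≤ (j : ℤ) := by exact_mod_cast hcj
    simp at hp2
    omega
  have hinj : Set.InjOn Prod.snd (↑S : Set (ℤ × ℤ)) := by
    intro p hp q hq hpq
    by_contra hne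
    exact ((hdisj p hp q hq hne).2.2.2) hpq
  calc S.card = (S.image Prod.snd).card := (Finset.card_image_of_injOn hinj).symm
    _ ≤ ((Finset.range k).image (fun i => (lam.f i : ℤ) - i)).card := by
        apply Finset.card_le_card
        intro w hw
        simp only [Finset.mem_image] at hw ⊢
        obtain ⟨p, hp, rfl⟩ := hw
        obtain ⟨i, hik, hi⟩ := key p hp
        exact ⟨i, Finset.mem_range.mpr hik, hi.symm⟩
    _ ≤ k := Finset.card_image_le.trans (by simp)
end

section
/- Let k ≥ 0 and let λ be a partition with λ_1 ≤ k. Then the defect of the bipartition (λ, λ*) relative to δ = 0 satisfies d((λ, λ*)) ≤ k. -/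
/-- if `λ_1 ≤ k` then `d((λ, λ*)) ≤ k` relative to `δ = 0`. -/
theorem stmt5 (k : ℕ) (lam : PartitionFn) (h : lam.f 0 ≤ k)
    (S : Finset (ℤ × ℤ)) (hS : CapFamily 0 lam.f (conjFn lam.f) S) :
    S.card ≤ k := by
  obtain ⟨hlab, hdisj⟩ := hS
  have key : ∀ p : ℤ × ℤ, ∃ i : ℕ, p ∈ S →
      i < k ∧ p.1 = (i : ℤ) + 1 - 0 - (conjFn lam.f i : ℤ) := by
    intro p
    by_cases hp : p ∈ S
    · obtain ⟨hlt, hv, hw⟩ := hlab p hp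
      obtain ⟨i, hi⟩ := hv.1
      refine ⟨i, fun _ => ⟨?_, hi⟩⟩
      by_contra hik
      push_neg at hik
      have hfz : conjFn lam.f i = 0 := by
        unfold conjFn
        convert Set.ncard_empty ℕ
        ext i'
        simp only [Set.mem_setOf_eq, Set.mem_empty_iff_false, iff_false]
        intro hle
        have := lam.antitone' 0 i' (Nat.zero_le _)
        omega
      obtain ⟨j, hj⟩ := hw.1
      have hfj : lam.f j ≤ lam.f 0 := lam.antitone' 0 j (Nat.zero_le _)
      rw [hfz] at hi
      have hj0 : (0 : ℤ) ≤ (j : ℤ) := Int.natCast_nonneg j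
      have hcast : (lam.f j : ℤ) ≤ (lam.f 0 : ℤ) := by exact_mod_cast hfj
      have hk : (lam.f 0 : ℤ) ≤ (k : ℤ) := by exact_mod_cast h
      have hik' : (k : ℤ) ≤ (i : ℤ) := by exact_mod_cast hik
      omega
    · exact ⟨0, fun hc => absurd hc hp⟩
  choose g hg using key
  have hcard : S.card ≤ (Finset.range k).card := by
    apply Finset.card_le_card_of_injOn g
    · intro p hp
      simp only [Finset.mem_coe, Finset.mem_range]
      exact (hg p hp).1
    · intro p hp q hq hpq
      by_contra hne
      have h1 := (hg p hp).2
      have h2 := (hg q hq).2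
      have : p.1 = q.1 := by rw [h1, h2, hpq]
      exact (hdisj p hp q hq hne).1 this
  simpa using hcard
end

section
/- Let n ≥ 1 and let λ be a partition such that the bipartition (λ, λ*) has defect n relative to δ = 0 (the condition that the mixed tensor R(λ) of Gl(n|n) is projective). Then l(λ) ≥ n and λ_1 ≥ n. -/
/-- if `d((λ, λ*)) = n` relative to `δ = 0` (i.e. `R(λ)` is projective),
then `l(λ) ≥ n` and `λ_1 ≥ n`. -/
theorem stmt6 (n : ℕ) (hn : 1 ≤ n) (lam : PartitionFn)
    (h : DefectEq 0 lam.f (conjFn lam.f) n) :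
    n ≤ plen lam.f ∧ n ≤ lam.f 0 := by
  classical
  obtain ⟨⟨S, ⟨hlab, hdisj⟩, hcard⟩, -⟩ := h
  set f := lam.f with hf
  set g := conjFn f with hg
  obtain ⟨N, hN⟩ := lam.ev_zero
  rw [← hf] at hN
  have hanti : ∀ i j : ℕ, i ≤ j → f j ≤ f i := lam.antitone'
  -- finiteness of the sets defining the conjugate
  have hfin : ∀ j : ℕ, {i : ℕ | j + 1 ≤ f i}.Finite := by
    intro j
    apply Set.Finite.subset (Set.finite_Iio N)
    intro i hi
    simp only [Set.mem_setOf_eq] at hi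
    simp only [Set.mem_Iio]
    by_contra hiN
    have := hN i (by omega)
    omega
  have hg_anti : ∀ a b : ℕ, a ≤ b → g b ≤ g a := by
    intro a b hab
    exact Set.ncard_le_ncard (fun i hi => by
      simp only [Set.mem_setOf_eq] at hi ⊢; omega) (hfin a)
  have hplen : plen f = g 0 := by
    have hset : {i : ℕ | 0 < f i} = {i : ℕ | 0 + 1 ≤ f i} := by
      ext i; simp only [Set.mem_setOf_eq]; omega
    simp only [hg, plen, conjFn, hset]
  have hplen_ge : ∀ m : ℕ, 0 < f m → m + 1 ≤ plen f := by
    intro m hm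
    have hsub : Set.Iic m ⊆ {i : ℕ | 0 < f i} := by
      intro i hi
      simp only [Set.mem_Iic] at hi
      simp only [Set.mem_setOf_eq]
      have := hanti i m hi
      omega
    have hfin' : {i : ℕ | 0 < f i}.Finite := by
      have : {i : ℕ | 0 < f i} = {i : ℕ | 0 + 1 ≤ f i} := by
        ext i; simp only [Set.mem_setOf_eq]; omega
      rw [this]; exact hfin 0
    have h1 : (Set.Iic m).ncard ≤ {i : ℕ | 0 < f i}.ncard :=
      Set.ncard_le_ncard hsub hfin'
    have h2 : (Set.Iic m).ncard = m + 1 := by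
      rw [show (Set.Iic m : Set ℕ) = ↑(Finset.Iic m) by simp, Set.ncard_coe_finset,
        Nat.card_Iic]
    unfold plen
    omega
  -- choice functions for membership in Ivee and Iwedge
  let J : ℤ → ℕ := fun v =>
    if h : ∃ j : ℕ, v = (j : ℤ) + 1 - 0 - (g j : ℤ) then h.choose else 0
  have hJspec : ∀ v : ℤ, v ∈ Ivee 0 g → v = (J v : ℤ) + 1 - 0 - (g (J v) : ℤ) := by
    intro v hv
    have hv' : ∃ j : ℕ, v = (j : ℤ) + 1 - 0 - (g j : ℤ) := hv
    simp only [J, dif_pos hv']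
    exact hv'.choose_spec
  let I : ℤ → ℕ := fun w =>
    if h : ∃ i : ℕ, w = (f i : ℤ) - (i : ℤ) then h.choose else 0
  have hIspec : ∀ w : ℤ, w ∈ Iwedge f → w = (f (I w) : ℤ) - (I w : ℤ) := by
    intro w hw
    have hw' : ∃ i : ℕ, w = (f i : ℤ) - (i : ℤ) := hw
    simp only [I, dif_pos hw']
    exact hw'.choose_spec
  -- a finset of n pairs with an injective index function has an element with index ≥ n-1
  have key : ∀ F : ℤ × ℤ → ℕ, (∀ p ∈ S, ∀ q ∈ S, F p = F q → p = q) →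
      ∃ p ∈ S, n ≤ F p + 1 := by
    intro F hinj
    by_contra hc
    push_neg at hc
    have himg : S.image F ⊆ Finset.range (n - 1) := by
      intro x hx
      obtain ⟨p, hp, rfl⟩ := Finset.mem_image.mp hx
      have := hc p hp
      simp only [Finset.mem_range]
      omega
    have h1 : (S.image F).card = n := by
      rw [Finset.card_image_of_injOn (fun p hp q hq => hinj p hp q hq), hcard]
    have h2 := Finset.card_le_card himg
    rw [h1, Finset.card_range] at h2
    omega
  -- first bound: n ≤ f 0
  have hbound1 : n ≤ f 0 := by
    obtain ⟨p, hpS, hpJ⟩ := key (fun p => J p.1) (by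
      intro p hp q hq hFq
      by_contra hne
      have hd := hdisj p hp q hq hne
      have hvp := ((hlab p hp).2.1).1
      have hvq := ((hlab q hq).2.1).1
      have e1 := hJspec p.1 hvp
      have e2 := hJspec q.1 hvq
      rw [hFq] at e1
      exact hd.1 (e1.trans e2.symm))
    have hvw := (hlab p hpS).1
    have hv := ((hlab p hpS).2.1).1
    have hw := ((hlab p hpS).2.2).1
    have e1 := hJspec p.1 hv
    obtain ⟨i, ei⟩ := hw
    have hfi : f i ≤ f 0 := hanti 0 i (Nat.zero_le i)
    have hgj : g (n - 1) ≥ g (J p.1) := hg_anti (n - 1) (J p.1) (by omega)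
    -- suppose f 0 < n; then g (n-1) = 0
    by_contra hcon
    push_neg at hcon
    have hempty : g (n - 1) = 0 := by
      rw [hg]; unfold conjFn
      have : {i : ℕ | n - 1 + 1 ≤ f i} = ∅ := by
        ext k
        simp only [Set.mem_setOf_eq, Set.mem_empty_iff_false, iff_false]
        have := hanti 0 k (Nat.zero_le k)
        omega
      rw [this, Set.ncard_empty]
    -- derive contradiction: f 0 + g (n-1) ≥ n + 1
    have h1 : (p.2 : ℤ) ≤ (f 0 : ℤ) := by
      rw [ei]
      have : (f i : ℤ) ≤ (f 0 : ℤ) := by exact_mod_cast hfi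
      omega
    have h2 : (g (J p.1) : ℤ) = (J p.1 : ℤ) + 1 - p.1 := by omega
    have h3 : (n : ℤ) ≤ (J p.1 : ℤ) + 1 := by exact_mod_cast hpJ
    have h4 : (g (n - 1) : ℤ) ≥ (g (J p.1) : ℤ) := by exact_mod_cast hgj
    omega
  -- second bound: n ≤ plen f
  have hbound2 : n ≤ plen f := by
    by_cases hcase : n ≤ plen f
    · exact hcase
    push_neg at hcase
    obtain ⟨p, hpS, hpI⟩ := key (fun p => I p.2) (by
      intro p hp q hq hFq
      by_contra hne
      have hd := hdisj p hp q hq hne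
      have hwp := ((hlab p hp).2.2).1
      have hwq := ((hlab q hq).2.2).1
      have e1 := hIspec p.2 hwp
      have e2 := hIspec q.2 hwq
      rw [hFq] at e1
      exact hd.2.2.2 (e1.trans e2.symm))
    have hvw := (hlab p hpS).1
    have hv := ((hlab p hpS).2.1).1
    have hw := ((hlab p hpS).2.2).1
    have e1 := hIspec p.2 hw
    have e2 := hJspec p.1 hv
    have hfi : f (I p.2) ≤ f (n - 1) := hanti (n - 1) (I p.2) (by omega)
    have hgj : g (J p.1) ≤ g 0 := hg_anti 0 (J p.1) (Nat.zero_le _)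
    -- f (n-1) ≥ n + 1 - g 0 > 0, so plen ≥ n
    have hf1 : (f (I p.2) : ℤ) ≤ (f (n - 1) : ℤ) := by exact_mod_cast hfi
    have hg1 : (g (J p.1) : ℤ) ≤ (g 0 : ℤ) := by exact_mod_cast hgj
    have hIn : (n : ℤ) ≤ (I p.2 : ℤ) + 1 := by exact_mod_cast hpI
    have hg0 : g 0 < n := by rw [← hplen]; exact hcase
    have hfpos : 0 < f (n - 1) := by omega
    have := hplen_ge (n - 1) hfpos
    omega
  exact ⟨hbound2, hbound1⟩
end

section
/- Let n ≥ 1. The staircase partition (n, n−1, …, 2, 1) satisfies d(((n,…,1), (n,…,1)*)) = n relative to δ = 0, and it is the unique partition of minimal size with this defect: every partition λ with d((λ, λ*)) = n (relative to δ = 0) satisfies |λ| ≥ n(n+1)/2, with equality if and only if λ = (n, n−1, …, 2, 1). (Equivalently, there is a unique projective mixed tensor R(λ) of Gl(n|n) with λ of smallest degree, given by the staircase.) -/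
/-! ### Auxiliary lemmas -/

/-- Threshold characterization of the conjugate partition. -/
lemma conj_lt_iff (f : ℕ → ℕ) (hf : ∀ i j : ℕ, i ≤ j → f j ≤ f i)
    (hz : ∃ N : ℕ, ∀ i : ℕ, N ≤ i → f i = 0) (j : ℕ) :
    ∀ i : ℕ, j + 1 ≤ f i ↔ i < conjFn f j := by
  obtain ⟨N, hN⟩ := hz
  have hne : {i : ℕ | f i ≤ j}.Nonempty := ⟨N, by simp [hN N le_rfl]⟩
  set m := sInf {i : ℕ | f i ≤ j} with hm
  have hmem : f m ≤ j := csInf_mem hne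
  have key : ∀ i : ℕ, j + 1 ≤ f i ↔ i < m := by
    intro i
    constructor
    · intro h
      by_contra hlt
      push_neg at hlt
      have := hf m i hlt
      omega
    · intro h
      have : i ∉ {i : ℕ | f i ≤ j} := fun hc => Nat.notMem_of_lt_sInf h hc
      simpa using Nat.lt_of_not_le (by simpa using this)
  have hset : {i : ℕ | j + 1 ≤ f i} = ↑(Finset.range m) := by
    ext i; simp only [Set.mem_setOf_eq, Finset.coe_range, Set.mem_Iio, key i]
  have : conjFn f j = m := by
    rw [conjFn, hset, Set.ncard_coe_finset, Finset.card_range]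
  rw [this]; exact key

lemma stair_anti (n : ℕ) : ∀ i j : ℕ, i ≤ j → n - j ≤ n - i := fun i j h => by omega

lemma stair_zero (n : ℕ) : ∃ N : ℕ, ∀ i : ℕ, N ≤ i → n - i = 0 := ⟨n, fun i h => by omega⟩

/-- The staircase is self-conjugate. -/
lemma stair_conj (n : ℕ) : conjFn (fun i => n - i) = fun j => n - j := by
  funext j
  have h := conj_lt_iff (fun i => n - i) (stair_anti n) (stair_zero n) j
  have h1 := h (conjFn (fun i => n - i) j)
  have h2 := h (n - j)
  omega

/-- key: a ∨ from column j, lying below a ∧ from row i, means cell (i,j) is in λ. -/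
lemma cell_of_cap (f : ℕ → ℕ) (hf : ∀ i j : ℕ, i ≤ j → f j ≤ f i)
    (hz : ∃ N : ℕ, ∀ i : ℕ, N ≤ i → f i = 0) {i j : ℕ}
    (h : (j : ℤ) + 1 - (conjFn f j : ℤ) < (f i : ℤ) - (i : ℤ)) : j + 1 ≤ f i := by
  by_contra hc
  push_neg at hc
  have h1 := (conj_lt_iff f hf hz j i).not
  have hge : conjFn f j ≤ i := by omega
  have : (f i : ℤ) - i ≤ (j : ℤ) - i := by
    have : f i ≤ j := by omega
    omega
  omega

lemma sum_stair (n : ℕ) : 2 * (∑ i ∈ Finset.range n, (n - i)) = n * (n + 1) := by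
  induction n with
  | zero => simp
  | succ n ih =>
    rw [Finset.sum_range_succ']
    have : ∑ i ∈ Finset.range n, (n + 1 - (i + 1)) = ∑ i ∈ Finset.range n, (n - i) :=
      Finset.sum_congr rfl (fun i hi => by omega)
    rw [this]
    have h2 : (n+1) * (n+1+1) = n * (n+1) + 2 * (n + 1 - 0) := by ring_nf; omega
    omega

lemma stair_sum_eq (n : ℕ) : ∑ i ∈ Finset.range n, (n - i) = n * (n + 1) / 2 := by
  have h := sum_stair n
  rw [← h, Nat.mul_div_cancel_left _ (by norm_num)]

/-- From a cap family of size `n`, the partition contains the staircase. -/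
lemma contains_staircase (f : ℕ → ℕ) (hf : ∀ i j : ℕ, i ≤ j → f j ≤ f i)
    (hz : ∃ N : ℕ, ∀ i : ℕ, N ≤ i → f i = 0) (n : ℕ) (S : Finset (ℤ × ℤ))
    (hS : CapFamily 0 f (conjFn f) S) (hcard : S.card = n) :
    ∀ m : ℕ, n - m ≤ f m := by
  intro m
  rcases Nat.lt_or_ge m n with hm | hm
  swap
  · omega
  have hw : ∀ p : ℤ × ℤ, ∃ i : ℕ, p ∈ S → p.2 = (f i : ℤ) - (i : ℤ) := by
    intro p
    by_cases h : p ∈ S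
    · obtain ⟨i, hi⟩ := ((hS.1 p h).2.2).1
      exact ⟨i, fun _ => hi⟩
    · exact ⟨0, fun h' => absurd h' h⟩
  have hv : ∀ p : ℤ × ℤ, ∃ j : ℕ, p ∈ S → p.1 = (j : ℤ) + 1 - 0 - (conjFn f j : ℤ) := by
    intro p
    by_cases h : p ∈ S
    · obtain ⟨j, hj⟩ := ((hS.1 p h).2.1).1
      exact ⟨j, fun _ => hj⟩
    · exact ⟨0, fun h' => absurd h' h⟩
  choose I hI using hw
  choose J hJ using hv
  have hcell : ∀ p ∈ S, J p + 1 ≤ f (I p) := by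
    intro p hp
    apply cell_of_cap f hf hz
    have h1 := hI p hp
    have h2 := hJ p hp
    have h3 := (hS.1 p hp).1
    rw [h2, h1] at h3
    omega
  have hinjI : ∀ p ∈ S, ∀ q ∈ S, I p = I q → p = q := by
    intro p hp q hq h
    by_contra hne
    have := (hS.2 p hp q hq hne).2.2.2
    rw [hI p hp, hI q hq, h] at this
    exact this rfl
  have hinjJ : ∀ p ∈ S, ∀ q ∈ S, J p = J q → p = q := by
    intro p hp q hq h
    by_contra hne
    have := (hS.2 p hp q hq hne).1
    rw [hJ p hp, hJ q hq, h] at this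
    exact this rfl
  set S1 := S.filter (fun p => I p < m) with hS1
  set S2 := S.filter (fun p => ¬ I p < m) with hS2
  have hc1 : S1.card ≤ m := by
    have himg : S1.image I ⊆ Finset.range m := by
      intro x hx
      simp only [hS1, Finset.mem_image, Finset.mem_filter] at hx
      obtain ⟨p, ⟨_, hlt⟩, rfl⟩ := hx
      simpa using hlt
    have hcc : (S1.image I).card = S1.card := by
      apply Finset.card_image_of_injOn
      intro p hp q hq h
      simp only [hS1, Finset.mem_coe, Finset.mem_filter] at hp hq
      exact hinjI p hp.1 q hq.1 h
    calc S1.card = (S1.image I).card := hcc.symm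
      _ ≤ (Finset.range m).card := Finset.card_le_card himg
      _ = m := Finset.card_range m
  have hc2 : n - m ≤ S2.card := by
    have := Finset.card_filter_add_card_filter_not (s := S)
      (p := fun p => I p < m)
    simp only [← hS1, ← hS2] at this
    omega
  have hcols : (S2.image J).card = S2.card := by
    apply Finset.card_image_of_injOn
    intro p hp q hq h
    simp only [hS2, Finset.mem_coe, Finset.mem_filter] at hp hq
    exact hinjJ p hp.1 q hq.1 h
  have : ∃ p ∈ S2, n - m ≤ J p + 1 := by
    by_contra hc
    push_neg at hc
    have hsub : S2.image J ⊆ Finset.range (n - m - 1) := by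
      intro x hx
      simp only [Finset.mem_image] at hx
      obtain ⟨p, hp, rfl⟩ := hx
      have := hc p hp
      simp only [Finset.mem_range]
      omega
    have := Finset.card_le_card hsub
    rw [hcols, Finset.card_range] at this
    omega
  obtain ⟨p, hp, hjp⟩ := this
  simp only [hS2, Finset.mem_filter] at hp
  have h2 : f (I p) ≤ f m := hf m (I p) (by omega)
  have := hcell p hp.1
  omega

/-- The staircase partition has defect `n`. -/
lemma stair_defect (n : ℕ) :
    DefectEq 0 (fun i => n - i) (conjFn (fun i => n - i)) n := by
  rw [stair_conj]
  have hwedge : ∀ x : ℤ, x ∈ Iwedge (fun i => n - i) ↔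
      (∃ k : ℕ, k < n ∧ x = (n : ℤ) - 2 * k) ∨ (∃ i : ℕ, n ≤ i ∧ x = -(i : ℤ)) := by
    intro x
    simp only [Iwedge, Set.mem_setOf_eq]
    constructor
    · rintro ⟨i, rfl⟩
      rcases Nat.lt_or_ge i n with h | h
      · left; exact ⟨i, h, by beta_reduce; omega⟩
      · right; exact ⟨i, h, by beta_reduce; omega⟩
    · rintro (⟨k, hk, rfl⟩ | ⟨i, hi, rfl⟩)
      · exact ⟨k, by beta_reduce; omega⟩
      · exact ⟨i, by beta_reduce; omega⟩
  have hvee : ∀ x : ℤ, x ∈ Ivee 0 (fun j => n - j) ↔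
      (∃ k : ℕ, k < n ∧ x = 2 * (k : ℤ) + 1 - n) ∨ (∃ j : ℕ, n ≤ j ∧ x = (j : ℤ) + 1) := by
    intro x
    simp only [Ivee, Set.mem_setOf_eq]
    constructor
    · rintro ⟨j, rfl⟩
      rcases Nat.lt_or_ge j n with h | h
      · left; exact ⟨j, h, by beta_reduce; omega⟩
      · right; exact ⟨j, h, by beta_reduce; omega⟩
    · rintro (⟨k, hk, rfl⟩ | ⟨j, hj, rfl⟩)
      · exact ⟨k, by beta_reduce; omega⟩
      · exact ⟨j, by beta_reduce; omega⟩
  constructor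
  · refine ⟨(Finset.range n).image
      (fun k : ℕ => ((n : ℤ) - 2 * (k:ℤ) - 1, (n : ℤ) - 2 * (k:ℤ))), ?_, ?_⟩
    · constructor
      · intro p hp
        simp only [Finset.mem_image, Finset.mem_range] at hp
        obtain ⟨k, hk, rfl⟩ := hp
        refine ⟨by omega, ⟨?_, ?_⟩, ⟨?_, ?_⟩⟩
        · rw [hvee]; left; exact ⟨n - 1 - k, by omega, by omega⟩
        · rw [hwedge]; push_neg
          constructor
          · rintro k' hk'; omega
          · rintro i hi; omega
        · rw [hwedge]; left; exact ⟨k, hk, rfl⟩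
        · rw [hvee]; push_neg
          constructor
          · rintro k' hk'; omega
          · rintro j hj; omega
      · intro p hp q hq hne
        simp only [Finset.mem_image, Finset.mem_range] at hp hq
        obtain ⟨k, hk, rfl⟩ := hp
        obtain ⟨k', hk', rfl⟩ := hq
        have : k ≠ k' := by rintro rfl; exact hne rfl
        refine ⟨by omega, by omega, by omega, by omega⟩
    · rw [Finset.card_image_of_injective _ ?_, Finset.card_range]
      intro a b h
      simp only [Prod.mk.injEq] at h
      omega
  · intro S hS
    have hsub : S.image Prod.fst ⊆
        (Finset.range n).image (fun k : ℕ => 2 * (k : ℤ) + 1 - (n:ℤ)) := by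
      intro x hx
      simp only [Finset.mem_image, Finset.mem_range] at hx ⊢
      obtain ⟨p, hp, rfl⟩ := hx
      obtain ⟨hlt, ⟨hv, _⟩, ⟨hw, _⟩⟩ := hS.1 p hp
      have h2 : p.2 ≤ (n : ℤ) := by
        rw [hwedge] at hw
        rcases hw with ⟨k, hk, h⟩ | ⟨i, hi, h⟩ <;> omega
      rw [hvee] at hv
      rcases hv with ⟨k, hk, h⟩ | ⟨j, hj, h⟩
      · exact ⟨k, hk, h.symm⟩
      · omega
    have hinj : (S.image Prod.fst).card = S.card := by
      apply Finset.card_image_of_injOn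
      intro p hp q hq h
      by_contra hne
      exact (hS.2 p hp q hq hne).1 h
    calc S.card = (S.image Prod.fst).card := hinj.symm
      _ ≤ ((Finset.range n).image (fun k : ℕ => 2 * (k : ℤ) + 1 - (n:ℤ))).card :=
          Finset.card_le_card hsub
      _ ≤ n := le_trans (Finset.card_image_le) (by simp)

/-- the staircase `(n, n−1, …, 1)` (0-indexed `i ↦ n − i`) has
`d((λ, λ*)) = n` relative to `δ = 0`, and it is the unique partition of minimal size
`n(n+1)/2` with this defect. -/
theorem stmt7 (n : ℕ) (hn : 1 ≤ n) :
    DefectEq 0 (fun i => n - i) (conjFn (fun i => n - i)) n ∧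
    ∀ lam : PartitionFn, DefectEq 0 lam.f (conjFn lam.f) n →
      n * (n + 1) / 2 ≤ ∑ᶠ i : ℕ, lam.f i ∧
      ((∑ᶠ i : ℕ, lam.f i) = n * (n + 1) / 2 ↔ lam.f = fun i => n - i) := by
  refine ⟨stair_defect n, ?_⟩
  intro lam hdef
  obtain ⟨N, hN⟩ := lam.ev_zero
  have hf := lam.antitone'
  obtain ⟨S, hS, hcard⟩ := hdef.1
  have hst : ∀ m : ℕ, n - m ≤ lam.f m :=
    contains_staircase lam.f hf ⟨N, hN⟩ n S hS hcard
  set M := max N n with hM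
  have hsupp : Function.support lam.f ⊆ ↑(Finset.range M) := by
    intro i hi
    simp only [Function.mem_support] at hi
    simp only [Finset.coe_range, Set.mem_Iio]
    by_contra h
    push_neg at h
    exact hi (hN i (by omega))
  have hsum : ∑ᶠ i : ℕ, lam.f i = ∑ i ∈ Finset.range M, lam.f i :=
    finsum_eq_sum_of_support_subset _ hsupp
  have hext : ∑ i ∈ Finset.range M, (n - i) = ∑ i ∈ Finset.range n, (n - i) := by
    refine (Finset.sum_subset (Finset.range_subset_range.2 (le_max_right _ _)) ?_).symm
    intro i _ hni
    simp only [Finset.mem_range] at hni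
    omega
  have hle : ∑ i ∈ Finset.range M, (n - i) ≤ ∑ i ∈ Finset.range M, lam.f i :=
    Finset.sum_le_sum (fun i _ => hst i)
  have hg : n * (n + 1) / 2 = ∑ i ∈ Finset.range M, (n - i) := by
    rw [hext, stair_sum_eq]
  constructor
  · rw [hsum, hg]; exact hle
  · constructor
    · intro heq
      have hsum2 : ∑ i ∈ Finset.range M, (n - i) = ∑ i ∈ Finset.range M, lam.f i := by
        rw [← hg, ← heq, hsum]
      have hall := (Finset.sum_eq_sum_iff_of_le (fun i _ => hst i)).1 hsum2
      funext m
      show lam.f m = n - m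
      rcases Nat.lt_or_ge m M with hm | hm
      · exact (hall m (Finset.mem_range.2 hm)).symm
      · have h0 : lam.f m = 0 := hN m (by omega)
        omega
    · intro heq
      rw [heq]
      have hsupp2 : Function.support (fun i : ℕ => n - i) ⊆ ↑(Finset.range n) := by
        intro i hi
        simp only [Function.mem_support] at hi
        simp only [Finset.coe_range, Set.mem_Iio]
        omega
      rw [finsum_eq_sum_of_support_subset _ hsupp2, stair_sum_eq]
end

section
/- Let λ be a nonzero partition such that the bipartition (λ, λ*) has defect 1 relative to δ = 0. Then there exists a ≥ 1 such that λ = (a) (a single row: λ_1 = a and λ_i = 0 for i ≥ 2) or λ = (1^a) (a single column: λ_i = 1 for 1 ≤ i ≤ a and λ_i = 0 for i > a). (In representation-theoretic terms: every mixed tensor of Gl(n|n) in the maximally atypical block of defect 1 is one of the modules 𝔸_{S^i} or 𝔸_{Λ^i}.) -/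
lemma conj_lt_iff_s8 (lam : PartitionFn) (c : ℕ) (i : ℕ) :
    c + 1 ≤ lam.f i ↔ i < conjFn lam.f c := by
  obtain ⟨N, hN⟩ := lam.ev_zero
  have hex : ∃ j, lam.f j ≤ c := ⟨N, by simp [hN N le_rfl]⟩
  have hset : {j : ℕ | c + 1 ≤ lam.f j} = Set.Iio (Nat.find hex) := by
    ext j
    simp only [Set.mem_setOf_eq, Set.mem_Iio]
    constructor
    · intro hj
      by_contra hjk
      push_neg at hjk
      have h1 := lam.antitone' (Nat.find hex) j hjk
      have h2 := Nat.find_spec hex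
      omega
    · intro hj
      have := Nat.find_min hex hj
      omega
  have hc : conjFn lam.f c = Nat.find hex := by
    rw [conjFn, hset, ← Finset.coe_range, Set.ncard_coe_finset, Finset.card_range]
  rw [hc]
  have := Set.ext_iff.mp hset i
  simpa using this

/-- a nonzero partition `λ` with `d((λ, λ*)) = 1` relative to `δ = 0` is a
single row `(a)` or a single column `(1^a)` for some `a ≥ 1`. -/
theorem stmt8 (lam : PartitionFn) (hne : lam.f ≠ fun _ => 0)
    (h : DefectEq 0 lam.f (conjFn lam.f) 1) :
    ∃ a : ℕ, 1 ≤ a ∧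
      ((lam.f = fun i => if i = 0 then a else 0) ∨
       (lam.f = fun i => if i < a then 1 else 0)) := by
  have hf0 : 1 ≤ lam.f 0 := by
    by_contra h0
    push_neg at h0
    apply hne
    funext i
    have := lam.antitone' 0 i (Nat.zero_le i)
    show lam.f i = 0
    omega
  by_cases h1 : lam.f 1 = 0
  · refine ⟨lam.f 0, hf0, Or.inl ?_⟩
    funext i
    rcases Nat.eq_zero_or_pos i with rfl | hi
    · simp
    · have := lam.antitone' 1 i hi
      simp only [if_neg (by omega : ¬ i = 0)]
      omega
  · by_cases h01 : lam.f 0 = 1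
    · -- column case
      obtain ⟨N, hN⟩ := lam.ev_zero
      have hex : ∃ j, lam.f j = 0 := ⟨N, hN N le_rfl⟩
      refine ⟨Nat.find hex, ?_, Or.inr ?_⟩
      · have hs := Nat.find_spec hex
        rcases Nat.eq_zero_or_pos (Nat.find hex) with hz | hp
        · rw [hz] at hs; omega
        · exact hp
      · funext i
        by_cases hia : i < Nat.find hex
        · have h2 := Nat.find_min hex hia
          have h3 := lam.antitone' 0 i (Nat.zero_le i)
          simp only [if_pos hia]
          omega
        · push_neg at hia
          have h2 := lam.antitone' (Nat.find hex) i hia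
          have h3 := Nat.find_spec hex
          simp only [if_neg (by omega : ¬ i < Nat.find hex)]
          omega
    · -- contradiction: λ₁ ≥ 2 and λ₂ ≥ 1 give defect ≥ 2
      exfalso
      have ha2 : 2 ≤ lam.f 0 := by omega
      have hb1 : 1 ≤ lam.f 1 := Nat.one_le_iff_ne_zero.mpr h1
      have hba : lam.f 1 ≤ lam.f 0 := lam.antitone' 0 1 (by omega)
      set a := lam.f 0 with ha
      set b := lam.f 1 with hb
      set l := conjFn lam.f 0 with hl
      set m := conjFn lam.f (a - 1) with hm
      have hLiff : ∀ i, 1 ≤ lam.f i ↔ i < l := fun i => by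
        simpa using conj_lt_iff_s8 lam 0 i
      have hMiff : ∀ i, a ≤ lam.f i ↔ i < m := fun i => by
        have := conj_lt_iff_s8 lam (a - 1) i
        rwa [Nat.sub_add_cancel (by omega)] at this
      have hl2 : 2 ≤ l := by have := (hLiff 1).mp hb1; omega
      have hm1 : 1 ≤ m := by have := (hMiff 0).mp le_rfl; omega
      have hml : m ≤ l := by
        by_contra hc
        push_neg at hc
        have hg := (hMiff l).mpr hc
        have hg2 := (hLiff l).mp (by omega)
        omega
      -- the four relevant vertices
      -- v1 = 1 - l, v2 = a - m, w1 = a, w2 = b - 1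
      have hw1W : ((a : ℤ)) ∈ Iwedge lam.f := ⟨0, by simp [ha]⟩
      have hw2W : ((b : ℤ) - 1) ∈ Iwedge lam.f := ⟨1, by simp [hb]⟩
      have hv1V : (1 - (l : ℤ)) ∈ Ivee 0 (conjFn lam.f) := ⟨0, by simp [hl]⟩
      have hv2V : ((a : ℤ) - (m : ℤ)) ∈ Ivee 0 (conjFn lam.f) := by
        refine ⟨a - 1, ?_⟩
        rw [← hm]
        have : ((a - 1 : ℕ) : ℤ) = (a : ℤ) - 1 := by omega
        rw [this]; ring
      have hv1nW : (1 - (l : ℤ)) ∉ Iwedge lam.f := by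
        rintro ⟨i, hi⟩
        by_cases hil : i < l
        · have := (hLiff i).mpr hil
          omega
        · push_neg at hil
          have h0 : lam.f i = 0 := by
            by_contra hc
            have := (hLiff i).mp (by omega)
            omega
          rw [h0] at hi
          omega
      have hv2nW : ((a : ℤ) - (m : ℤ)) ∉ Iwedge lam.f := by
        rintro ⟨i, hi⟩
        by_cases him : i < m
        · have hge := (hMiff i).mpr him
          have hle := lam.antitone' 0 i (Nat.zero_le i)
          rw [← ha] at hle
          omega
        · push_neg at him
          have hlt : lam.f i < a := by
            by_contra hc
            have := (hMiff i).mp (by omega)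
            omega
          omega
      have hw1nV : ((a : ℤ)) ∉ Ivee 0 (conjFn lam.f) := by
        rintro ⟨i, hi⟩
        have hci := conj_lt_iff_s8 lam i 0
        rw [← ha] at hci
        by_cases hia : i + 1 ≤ a
        · have : 0 < conjFn lam.f i := hci.mp hia
          omega
        · have : ¬ 0 < conjFn lam.f i := fun hc => by
            have := hci.mpr hc; omega
          omega
      have hw2nV : ((b : ℤ) - 1) ∉ Ivee 0 (conjFn lam.f) := by
        rintro ⟨i, hi⟩
        have hci := conj_lt_iff_s8 lam i 1
        rw [← hb] at hci
        by_cases hib : i + 1 ≤ b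
        · have h2 : 1 < conjFn lam.f i := hci.mp hib
          omega
        · have : ¬ 1 < conjFn lam.f i := fun hc => by
            have := hci.mpr hc; omega
          omega
      -- the two caps
      set p : ℤ × ℤ := (1 - (l : ℤ), (b : ℤ) - 1) with hp
      set q : ℤ × ℤ := ((a : ℤ) - (m : ℤ), (a : ℤ)) with hq
      have hpq : p ≠ q := by
        intro hc
        have h2 := congrArg Prod.fst hc
        simp only [hp, hq] at h2
        omega
      have hv1v2 : (1 - (l : ℤ)) ≠ (a : ℤ) - (m : ℤ) := by omega
      have hv1w1 : (1 - (l : ℤ)) ≠ (a : ℤ) := by omega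
      have hv2w2 : ((a : ℤ) - (m : ℤ)) ≠ (b : ℤ) - 1 := by
        intro heq
        exact hv2nW (heq ▸ hw2W)
      have hw1w2 : ((b : ℤ) - 1) ≠ (a : ℤ) := by omega
      have hfam : CapFamily 0 lam.f (conjFn lam.f) {p, q} := by
        constructor
        · intro r hr
          simp only [Finset.mem_insert, Finset.mem_singleton] at hr
          rcases hr with rfl | rfl
          · exact ⟨by simp [hp]; omega, ⟨hv1V, hv1nW⟩, ⟨hw2W, hw2nV⟩⟩
          · exact ⟨by simp [hq]; omega, ⟨hv2V, hv2nW⟩, ⟨hw1W, hw1nV⟩⟩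
        · intro r hr s hs hrs
          simp only [Finset.mem_insert, Finset.mem_singleton] at hr hs
          rcases hr with rfl | rfl <;> rcases hs with rfl | rfl
          · exact absurd rfl hrs
          · exact ⟨hv1v2, hv1w1, fun hc => hv2w2 hc.symm, hw1w2⟩
          · exact ⟨fun hc => hv1v2 hc.symm, hv2w2, fun hc => hv1w1 hc.symm,
              fun hc => hw1w2 hc.symm⟩
          · exact absurd rfl hrs
      have hcard : ({p, q} : Finset (ℤ × ℤ)).card = 2 := by
        rw [Finset.card_insert_of_notMem (by simpa using hpq), Finset.card_singleton]
      have := h.2 _ hfam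
      omega
end

section
/- Let λ be a nonzero partition. Then the bipartition (λ, λ*) has defect at least 1 relative to δ = 0; that is, in its weight diagram there exist integers v < w with v labelled ∨ and w labelled ∧. (This is the combinatorial form of the statement that for m = n no nontrivial maximally atypical mixed tensor of Gl(n|n) is irreducible.) -/
/-- a nonzero partition `λ` has `d((λ, λ*)) ≥ 1` relative to `δ = 0`:
there are integers `v < w` with `v` labelled `∨` and `w` labelled `∧`. -/
theorem stmt9 (lam : PartitionFn) (hne : lam.f ≠ fun _ => 0) :
    ∃ v w : ℤ, v < w ∧ VeeLabel 0 lam.f (conjFn lam.f) v ∧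
      WedgeLabel 0 lam.f (conjFn lam.f) w := by
  obtain ⟨N, hN⟩ := lam.ev_zero
  have hmono := lam.antitone'
  set f := lam.f with hf
  -- f 0 > 0
  have hf0 : 1 ≤ f 0 := by
    by_contra h
    push_neg at h
    apply hne
    funext i
    have := hmono 0 i (Nat.zero_le i)
    omega
  -- finiteness of the defining sets
  have hfin : ∀ j : ℕ, {i : ℕ | j + 1 ≤ f i}.Finite := by
    intro j
    apply Set.Finite.subset (Set.finite_Iio N)
    intro k hk
    simp only [Set.mem_setOf_eq] at hk
    simp only [Set.mem_Iio]
    by_contra h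
    push_neg at h
    have := hN k h
    omega
  -- conj 0 ≤ i when f i = 0
  have hA : ∀ i : ℕ, f i = 0 → conjFn f 0 ≤ i := by
    intro i hi
    have hsub : {k : ℕ | 0 + 1 ≤ f k} ⊆ ↑(Finset.range i) := by
      intro k hk
      simp only [Set.mem_setOf_eq] at hk
      simp only [Finset.coe_range, Set.mem_Iio]
      by_contra h
      push_neg at h
      have := hmono i k h
      omega
    calc conjFn f 0 ≤ (↑(Finset.range i) : Set ℕ).ncard :=
          Set.ncard_le_ncard hsub (Finset.range i).finite_toSet
      _ = i := by rw [Set.ncard_coe_finset, Finset.card_range]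
  -- conj 0 ≥ i + 1 when f i ≥ 1
  have hB : ∀ i : ℕ, 1 ≤ f i → i + 1 ≤ conjFn f 0 := by
    intro i hi
    have hsub : ↑(Finset.range (i + 1)) ⊆ {k : ℕ | 0 + 1 ≤ f k} := by
      intro k hk
      simp only [Finset.coe_range, Set.mem_Iio] at hk
      simp only [Set.mem_setOf_eq]
      have := hmono k i (by omega)
      omega
    calc i + 1 = (↑(Finset.range (i + 1)) : Set ℕ).ncard := by
          rw [Set.ncard_coe_finset, Finset.card_range]
      _ ≤ conjFn f 0 := Set.ncard_le_ncard hsub (hfin 0)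
  have hc0 : 1 ≤ conjFn f 0 := hB 0 hf0
  refine ⟨1 - (conjFn f 0 : ℤ), (f 0 : ℤ), ?_, ?_, ?_⟩
  · have : (1 : ℤ) ≤ conjFn f 0 := by exact_mod_cast hc0
    have : (1 : ℤ) ≤ f 0 := by exact_mod_cast hf0
    omega
  · constructor
    · exact ⟨0, by push_cast; ring⟩
    · rintro ⟨i, hi⟩
      by_cases h : f i = 0
      · have := hA i h
        rw [h] at hi
        have : (conjFn f 0 : ℤ) ≤ i := by exact_mod_cast this
        omega
      · have h1 : 1 ≤ f i := by omega
        have := hB i h1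
        have h2 : (i : ℤ) + 1 ≤ conjFn f 0 := by exact_mod_cast this
        have h3 : (1 : ℤ) ≤ f i := by exact_mod_cast h1
        omega
  · constructor
    · exact ⟨0, by push_cast; ring⟩
    · rintro ⟨i, hi⟩
      simp only [sub_zero] at hi
      by_cases h : f 0 ≤ i
      · have hz : conjFn f i = 0 := by
          have : {k : ℕ | i + 1 ≤ f k} = ∅ := by
            ext k
            simp only [Set.mem_setOf_eq, Set.mem_empty_iff_false, iff_false]
            have := hmono 0 k (Nat.zero_le k)
            omega
          simp only [conjFn, this, Set.ncard_empty]
        rw [hz] at hi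
        have : (f 0 : ℤ) ≤ i := by exact_mod_cast h
        omega
      · push_neg at h
        have hmem : (0 : ℕ) ∈ {k : ℕ | i + 1 ≤ f k} := by
          simp only [Set.mem_setOf_eq]; omega
        have hpos : 1 ≤ conjFn f i := by
          have := Set.ncard_pos (hfin i)
          exact this.mpr ⟨0, hmem⟩
        have h1 : (conjFn f i : ℤ) ≥ 1 := by exact_mod_cast hpos
        have h2 : (i : ℤ) + 1 ≤ f 0 := by exact_mod_cast h
        omega
end
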